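/- Let ρ be the Weil representation of SL(2,F_q) (q odd, dimension q) with character ch_ρ(g) = σ(−det(g−I)) for g−I invertible, and let T ⊂ SL(2,F_q) be an inert (nonsplit) maximal torus, of order q+1. Then for each character χ of T, the multiplicity of χ in ρ|_T equals 1 if χ ≠ σ_T and equals 0 if χ = σ_T, where σ_T is the unique quadratic character of T. -/

import Mathlib

open Polynomial

private theorem sl2_invol {F : Type*} [Field F] (h2 : (2 : F) ≠ 0)
    (N : Matrix (Fin 2) (Fin 2) F) (hdet : N.det = 1) (hN : N * N = 1) (hne : N ≠ 1) :
    N = -1 := by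
  have e := fun i j => congrFun (congrFun (congrArg (fun A => (A : Matrix (Fin 2) (Fin 2) F)) hN) i) j
  have e00 := e 0 0; have e01 := e 0 1; have e10 := e 1 0; have e11 := e 1 1
  simp [Matrix.mul_apply, Fin.sum_univ_two, Matrix.one_apply] at e00 e01 e10 e11
  rw [Matrix.det_fin_two] at hdet
  have had : N 0 0 + N 1 1 ≠ 0 := by
    intro h
    apply h2
    linear_combination N 0 0 * h - e00 - hdet
  have hb : N 0 1 = 0 := by
    rcases mul_eq_zero.1 (show N 0 1 * (N 0 0 + N 1 1) = 0 by linear_combination e01) with h | h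
    · exact h
    · exact absurd h had
  have hc : N 1 0 = 0 := by
    rcases mul_eq_zero.1 (show N 1 0 * (N 0 0 + N 1 1) = 0 by linear_combination e10) with h | h
    · exact h
    · exact absurd h had
  have ha2 : N 0 0 * N 0 0 = 1 := by linear_combination e00 - N 1 0 * hb
  have hN00 : N 0 0 ≠ 0 := by
    intro h
    rw [h, zero_mul] at ha2
    exact zero_ne_one ha2
  have hd : N 1 1 = N 0 0 := by
    rcases mul_eq_zero.1 (show N 0 0 * (N 1 1 - N 0 0) = 0 by
      linear_combination hdet - ha2 + N 1 0 * hb) with h | h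
    · exact absurd h hN00
    · linear_combination h
  have haval : N 0 0 = -1 := by
    rcases mul_self_eq_one_iff.1 ha2 with h | h
    · exfalso; apply hne
      ext i j
      fin_cases i <;> fin_cases j <;>
        simp [h, hb, hc, hd, Matrix.one_apply]
    · exact h
  ext i j
  fin_cases i <;> fin_cases j <;>
    simp [haval, hb, hc, hd, Matrix.one_apply]

private theorem lemA {F : Type*} [Field F] [Fintype F] [DecidableEq F]
    (hodd : Odd (Fintype.card F))
    (M : Matrix (Fin 2) (Fin 2) F) (hdet : M.det = 1)
    (hM1 : M ^ (Fintype.card F + 1) = 1)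
    (hMm : M ^ ((Fintype.card F + 1) / 2) ≠ 1)
    (hM2 : M ^ 2 ≠ 1)
    (k : ℕ) (hdk : (M ^ k - 1).det ≠ 0) :
    (quadraticChar F (-(M ^ k - 1).det) : ℤ) = -(-1) ^ k := by
  obtain ⟨q', hq'⟩ := hodd
  have hchar2 : ringChar F ≠ 2 := by
    intro h
    have := FiniteField.even_card_of_char_two h
    omega
  have h2F : (2 : F) ≠ 0 := Ring.two_ne_zero hchar2
  have hne11 : (-1 : F) ≠ 1 := Ring.neg_one_ne_one_of_char_ne_two hchar2
  have hq1 : 1 ≤ Fintype.card F := Fintype.card_pos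
  have hdet2 : M 0 0 * M 1 1 - M 0 1 * M 1 0 = 1 := by rw [← Matrix.det_fin_two]; exact hdet
  set τ := M.trace with hτ
  have hτ2 : τ = M 0 0 + M 1 1 := by rw [hτ, Matrix.trace_fin_two]
  set P : F[X] := X ^ 2 - (C τ * X - C 1) with hPdef
  have hPlt : (C τ * X - C 1).degree < ((2 : ℕ) : WithBot ℕ) := by
    apply lt_of_le_of_lt (degree_sub_le _ _)
    rw [max_lt_iff]
    constructor
    · apply lt_of_le_of_lt (degree_C_mul_X_le τ)
      exact_mod_cast one_lt_two
    · apply lt_of_le_of_lt degree_C_le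
      exact_mod_cast two_pos
  have hPmonic : P.Monic := monic_X_pow_sub hPlt
  have hPdeg : P.degree = 2 := by
    rw [hPdef, degree_sub_eq_left_of_degree_lt (by rwa [degree_X_pow]), degree_X_pow]
    exact_mod_cast rfl
  -- evaluation at M
  have hcomm : ∀ a : F, Commute (algebraMap F (Matrix (Fin 2) (Fin 2) F) a) M :=
    fun a => Algebra.commutes a M
  set ev : F[X] →+* Matrix (Fin 2) (Fin 2) F :=
    eval₂RingHom' (algebraMap F (Matrix (Fin 2) (Fin 2) F)) M hcomm with hevdef
  have hevX : ev X = M := eval₂_X _ _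
  have hevC : ∀ a : F, ev (C a) = algebraMap F (Matrix (Fin 2) (Fin 2) F) a := fun a => eval₂_C _ _
  have hCH : M * M - algebraMap F (Matrix (Fin 2) (Fin 2) F) τ * M + 1 = 0 := by
    ext i j
    fin_cases i <;> fin_cases j <;>
      simp [Matrix.mul_apply, Fin.sum_univ_two, Matrix.trace_fin_two,
        Algebra.algebraMap_eq_smul_one, Matrix.one_apply]
    · linear_combination (-(M 0 0)) * hτ2 - hdet2
    · linear_combination (-(M 0 1)) * hτ2
    · linear_combination (-(M 1 0)) * hτ2
    · linear_combination (-(M 1 1)) * hτ2 - hdet2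
  have hPM : ev P = 0 := by
    rw [hPdef, map_sub, map_sub, map_mul, map_pow, hevX, hevC, hevC, map_one]
    have habel : M * M - (algebraMap F (Matrix (Fin 2) (Fin 2) F) τ * M - 1)
        = M * M - algebraMap F (Matrix (Fin 2) (Fin 2) F) τ * M + 1 := by abel
    rw [pow_two, habel]
    exact hCH
  -- the ring K = F[X]/(P) and the lift φ
  set φ : AdjoinRoot P →+* Matrix (Fin 2) (Fin 2) F :=
    Ideal.Quotient.lift _ ev (fun g hg => by
      rcases Ideal.mem_span_singleton.1 hg with ⟨y, rfl⟩
      rw [map_mul, hPM, zero_mul]) with hφdef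
  have hφmk : ∀ g : F[X], φ (AdjoinRoot.mk P g) = ev g := fun g => Ideal.Quotient.lift_mk _ _ _
  set x : AdjoinRoot P := AdjoinRoot.root P with hxdef
  have hφx : φ x = M := by rw [hxdef, AdjoinRoot.root, hφmk, hevX]
  have hφof : ∀ u : F, φ (AdjoinRoot.of P u) = algebraMap F (Matrix (Fin 2) (Fin 2) F) u :=
    fun u => by rw [AdjoinRoot.of, RingHom.comp_apply, hφmk, hevC]
    -- the relation x^2 = τ x - 1
  have hmkP : AdjoinRoot.mk P P = 0 := AdjoinRoot.mk_self
  have hx2 : x ^ 2 - (AdjoinRoot.of P τ * x - 1) = 0 := by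
    have h' : AdjoinRoot.mk P P = x ^ 2 - (AdjoinRoot.of P τ * x - 1) := by
      show AdjoinRoot.mk P (X ^ 2 - (C τ * X - C 1)) = x ^ 2 - (AdjoinRoot.of P τ * x - 1)
      rw [map_sub, map_sub, map_mul, map_pow, AdjoinRoot.mk_X, AdjoinRoot.mk_C,
        AdjoinRoot.mk_C, map_one]
    rw [← h', hmkP]
  -- representation of elements
  have hrepr : ∀ b : AdjoinRoot P, ∃ u v : F,
      b = AdjoinRoot.of P u + AdjoinRoot.of P v * x := by
    intro b
    obtain ⟨f, rfl⟩ := AdjoinRoot.mk_surjective b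
    refine ⟨(f %ₘ P).coeff 0, (f %ₘ P).coeff 1, ?_⟩
    conv_lhs => rw [← modByMonic_add_div f P]
    rw [map_add, map_mul, hmkP, zero_mul, add_zero]
    by_cases hf0 : f %ₘ P = 0
    · rw [hf0]; simp
    · have hdeg : (f %ₘ P).natDegree ≤ 1 := by
        have h1 := degree_modByMonic_lt f hPmonic
        rw [hPdeg] at h1
        have h2' : (f %ₘ P).natDegree < 2 := by
          rw [natDegree_lt_iff_degree_lt hf0]
          exact_mod_cast h1
        omega
      conv_lhs => rw [eq_X_add_C_of_natDegree_le_one hdeg]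
      rw [map_add, map_mul, AdjoinRoot.mk_X, AdjoinRoot.mk_C, AdjoinRoot.mk_C, add_comm]
  -- conjugation
  have hconj0 : P.eval₂ (AdjoinRoot.of P) (AdjoinRoot.of P τ - x) = 0 := by
    show eval₂ (AdjoinRoot.of P) (AdjoinRoot.of P τ - x) (X ^ 2 - (C τ * X - C 1)) = 0
    simp only [eval₂_sub, eval₂_mul, eval₂_pow, eval₂_X, eval₂_C, eval₂_one, map_one]
    linear_combination hx2
  set c : AdjoinRoot P →+* AdjoinRoot P :=
    AdjoinRoot.lift (AdjoinRoot.of P) (AdjoinRoot.of P τ - x) hconj0 with hcdef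
  have hcx : c x = AdjoinRoot.of P τ - x := AdjoinRoot.lift_root hconj0
  have hcof : ∀ u : F, c (AdjoinRoot.of P u) = AdjoinRoot.of P u := fun u =>
    AdjoinRoot.lift_of hconj0
  -- determinant of φ on coordinates
  have hdetφ : ∀ u v : F, (φ (AdjoinRoot.of P u + AdjoinRoot.of P v * x)).det
      = u * u + τ * (u * v) + v * v := by
    intro u v
    have h1 : φ (AdjoinRoot.of P u + AdjoinRoot.of P v * x)
        = u • (1 : Matrix (Fin 2) (Fin 2) F) + v • M := by
      rw [map_add, map_mul, hφx, hφof, hφof, Algebra.algebraMap_eq_smul_one,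
        Algebra.algebraMap_eq_smul_one, smul_mul_assoc, one_mul]
    rw [h1, Matrix.det_fin_two]
    simp only [Matrix.add_apply, Matrix.smul_apply, Matrix.one_apply, smul_eq_mul]
    norm_num
    linear_combination (v * v) * hdet2 + (-(u * v)) * hτ2
  -- norm identity
  have hnorm : ∀ b : AdjoinRoot P, AdjoinRoot.of P ((φ b).det) = b * c b := by
    intro b
    obtain ⟨u, v, rfl⟩ := hrepr b
    rw [hdetφ]
    rw [map_add c, map_mul c, hcx, hcof, hcof]
    simp only [map_add, map_mul]
    linear_combination (AdjoinRoot.of P v * AdjoinRoot.of P v) * hx2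
  -- injectivity of `of`
  have hofinj : Function.Injective (AdjoinRoot.of P) := by
    have halg : Function.Injective (algebraMap F (Matrix (Fin 2) (Fin 2) F)) :=
      RingHom.injective _
    intro u v h
    apply halg
    rw [← hφof, ← hφof, h]
  -- M is not scalar: φ injective
  have hMnotscalar : ∀ u v : F, u • (1 : Matrix (Fin 2) (Fin 2) F) + v • M = 0 →
      u = 0 ∧ v = 0 := by
    intro u v h
    by_cases hv : v = 0
    · subst hv
      refine ⟨?_, rfl⟩
      have := congrFun (congrFun h 0) 0
      simpa [Matrix.one_apply] using this
    · exfalso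
      apply hM2
      have e := fun i j => congrFun (congrFun h i) j
      have h00 := e 0 0; have h01 := e 0 1; have h10 := e 1 0; have h11 := e 1 1
      simp [Matrix.one_apply] at h00 h01 h10 h11
      have hb : M 0 1 = 0 := h01.resolve_left hv
      have hc : M 1 0 = 0 := h10.resolve_left hv
      have h0011 : M 1 1 = M 0 0 := by
        rcases mul_eq_zero.1 (show v * (M 1 1 - M 0 0) = 0 by linear_combination h11 - h00)
          with h' | h'
        · exact absurd h' hv
        · linear_combination h'
      have hsq : M 0 0 * M 0 0 = 1 := by
        linear_combination hdet2 - M 0 0 * h0011 + M 1 0 * hb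
      rw [pow_two]
      ext i j
      fin_cases i <;> fin_cases j <;>
        simp [Matrix.mul_apply, Fin.sum_univ_two, Matrix.one_apply, hb, hc, h0011, hsq]
  have hφinj : Function.Injective φ := by
    intro b b' hbb
    have h0 : φ (b - b') = 0 := by rw [map_sub, hbb, sub_self]
    obtain ⟨u, v, he⟩ := hrepr (b - b')
    rw [he] at h0
    have h1 : u • (1 : Matrix (Fin 2) (Fin 2) F) + v • M = 0 := by
      rw [← h0, map_add, map_mul, hφx, hφof, hφof, Algebra.algebraMap_eq_smul_one,
        Algebra.algebraMap_eq_smul_one, smul_mul_assoc, one_mul]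
    obtain ⟨hu, hv⟩ := hMnotscalar u v h1
    have hz : b - b' = 0 := by rw [he, hu, hv]; simp
    exact sub_eq_zero.1 hz
  -- basic relations
  have hxcx : x * c x = 1 := by
    have h' := hnorm x
    rw [hφx, hdet, map_one] at h'
    exact h'.symm
  have hq1' : x ^ (Fintype.card F + 1) = 1 := by
    apply hφinj
    rw [map_pow, hφx, hM1, map_one]
  have hxq : x ^ Fintype.card F = c x := by
    have h1 : x * x ^ Fintype.card F = 1 := by rw [← pow_succ']; exact hq1'
    calc x ^ Fintype.card F = (c x * x) * x ^ Fintype.card F := by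
          rw [mul_comm (c x) x, hxcx, one_mul]
      _ = c x * (x * x ^ Fintype.card F) := by rw [mul_assoc]
      _ = c x := by rw [h1, mul_one]
  set m := (Fintype.card F + 1) / 2 with hmdef
  have hxm : x ^ m = -1 := by
    apply hφinj
    rw [map_pow, hφx, map_neg, map_one]
    refine sl2_invol h2F _ ?_ ?_ hMm
    · rw [Matrix.det_pow, hdet, one_pow]
    · rw [← pow_add, show m + m = Fintype.card F + 1 by omega]
      exact hM1
  have hcxm : (c x) ^ m = -1 := by
    have h1 : x ^ m * (c x) ^ m = 1 := by rw [← mul_pow, hxcx, one_pow]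
    rw [hxm] at h1
    linear_combination -h1
  -- the element a = x^k
  set a := x ^ k with hadef
  set a' := (c x) ^ k with ha'def
  have haa' : a * a' = 1 := by rw [hadef, ha'def, ← mul_pow, hxcx, one_pow]
  have hφa1 : φ (a - 1) = M ^ k - 1 := by rw [map_sub, map_pow, hφx, map_one]
  have hofd : AdjoinRoot.of P ((M ^ k - 1).det) = (a - 1) * c (a - 1) := by
    rw [← hφa1]; exact hnorm (a - 1)
  have hca1 : c (a - 1) = a' - 1 := by
    rw [map_sub, map_one, hadef, map_pow]
  have hbinv : (a - 1) * ((a' - 1) * AdjoinRoot.of P (((M ^ k - 1).det)⁻¹)) = 1 := by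
    rw [← mul_assoc, ← hca1, ← hofd, ← map_mul, mul_inv_cancel₀ hdk, map_one]
  -- Frobenius
  obtain ⟨nn, hpprime, hcardpow⟩ := FiniteField.card F (ringChar F)
  haveI factp : Fact (Nat.Prime (ringChar F)) := ⟨hpprime⟩
  haveI : CharP (AdjoinRoot P) (ringChar F) := charP_of_injective_ringHom hofinj (ringChar F)
  have hfrob : (a - 1) ^ Fintype.card F = a ^ Fintype.card F - 1 := by
    rw [hcardpow]
    rw [sub_pow_char_pow]
    rw [one_pow]
  have haq : a ^ Fintype.card F = a' := by
    rw [hadef, ← pow_mul, mul_comm k (Fintype.card F), pow_mul, hxq, ha'def]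
  have hstep : (a - 1) ^ (Fintype.card F - 1) = -a' := by
    have h5 : (a - 1) ^ (Fintype.card F - 1) * (a - 1) = -a' * (a - 1) := by
      rw [← pow_succ, show Fintype.card F - 1 + 1 = Fintype.card F by omega, hfrob, haq]
      linear_combination haa'
    have h6 := congrArg
      (fun z => z * ((a' - 1) * AdjoinRoot.of P (((M ^ k - 1).det)⁻¹))) h5
    rwa [mul_assoc, mul_assoc, hbinv, mul_one, mul_one] at h6
  have hofd2 : AdjoinRoot.of P (-(M ^ k - 1).det) = (a - 1) * (a - 1) * a' := by
    rw [map_neg, hofd, hca1]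
    linear_combination (1 - a) * haa'
  set e := Fintype.card F / 2 with hedef
  have hmain : (-(M ^ k - 1).det) ^ e = -(-1 : F) ^ k := by
    apply hofinj
    rw [map_pow, hofd2, map_neg, map_pow, map_neg, map_one]
    have hrw : ((a - 1) * (a - 1) * a') ^ e
        = (a - 1) ^ (Fintype.card F - 1) * a' ^ e := by
      rw [mul_pow, ← pow_two, ← pow_mul, show 2 * e = Fintype.card F - 1 by omega]
    rw [hrw, hstep]
    have ha'm : a' ^ m = (-1 : AdjoinRoot P) ^ k := by
      rw [ha'def, ← pow_mul, mul_comm k m, pow_mul, hcxm]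
    calc -a' * a' ^ e = -(a' ^ (e + 1)) := by rw [pow_succ']; ring
      _ = -((-1) ^ k) := by rw [show e + 1 = m by omega, ha'm]
  -- conclusion
  have hqc := quadraticChar_eq_pow_of_char_ne_two hchar2
    (show -(M ^ k - 1).det ≠ 0 from neg_ne_zero.2 hdk)
  rw [hqc]
  rcases Nat.even_or_odd k with hk | hk
  · have hval : (-(M ^ k - 1).det) ^ (Fintype.card F / 2) = -1 := by
      rw [← hedef, hmain, hk.neg_one_pow]
    rw [if_neg (by rw [hval]; exact hne11), Even.neg_one_pow hk]
  · have hval : (-(M ^ k - 1).det) ^ (Fintype.card F / 2) = 1 := by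
      rw [← hedef, hmain, hk.neg_one_pow, neg_neg]
    rw [if_pos hval, Odd.neg_one_pow hk, neg_neg]

open scoped Classical in
/-- Multiplicities of characters of an inert (nonsplit) maximal torus, of order `q+1`, in
the Weil representation of `SL(2, F_q)`: `m_χ = 1` for `χ ≠ σ_T` and `m_χ = 0` for the
quadratic character `σ_T`. -/
theorem stmt_10 (F : Type*) [Field F] [Fintype F] [DecidableEq F]
    (hodd : Odd (Fintype.card F))
    (H : Type*) [AddCommGroup H] [Module ℂ H] [FiniteDimensional ℂ H]
    (ρ : Representation ℂ (Matrix.SpecialLinearGroup (Fin 2) F) H)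
    (hdim : Module.finrank ℂ H = Fintype.card F)
    (hch : ∀ g : Matrix.SpecialLinearGroup (Fin 2) F,
      IsUnit ((g : Matrix (Fin 2) (Fin 2) F) - 1).det →
      LinearMap.trace ℂ H (ρ g) =
        ((quadraticChar F (-((g : Matrix (Fin 2) (Fin 2) F) - 1).det) : ℤ) : ℂ))
    (T : Subgroup (Matrix.SpecialLinearGroup (Fin 2) F)) [Fintype ↥T]
    (hcard : Fintype.card ↥T = Fintype.card F + 1)
    (hcyc : IsCyclic ↥T)
    (hreg : ∀ g ∈ T, g ≠ 1 → IsUnit ((g : Matrix (Fin 2) (Fin 2) F) - 1).det)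
    (χ : ↥T →* ℂˣ) :
    (Fintype.card ↥T : ℂ)⁻¹ * ∑ g : ↥T, (↑((χ g)⁻¹) : ℂ) * LinearMap.trace ℂ H (ρ ↑g) =
      if χ * χ = 1 ∧ χ ≠ 1 then 0 else 1 := by
  obtain ⟨t, ht⟩ := hcyc.exists_generator
  set n := Fintype.card ↥T with hndef
  have hq3 : 3 ≤ Fintype.card F := by
    have h2 : 1 < Fintype.card F := Fintype.one_lt_card
    rcases hodd with ⟨m, hm⟩
    omega
  have hn4 : 4 ≤ n := by omega
  have hordt : orderOf t = n := by
    rw [orderOf_eq_card_of_forall_mem_zpowers ht, Nat.card_eq_fintype_card, ← hndef]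
  -- the monoid hom to matrices
  let ψ : ↥T →* Matrix (Fin 2) (Fin 2) F :=
    { toFun := fun g => ((g : Matrix.SpecialLinearGroup (Fin 2) F) : Matrix (Fin 2) (Fin 2) F)
      map_one' := by simp
      map_mul' := by intro a b; simp }
  have hψinj : Function.Injective ψ := fun a b hab => Subtype.ext (Subtype.ext hab)
  set M : Matrix (Fin 2) (Fin 2) F := ψ t with hMdef
  have hMpow : ∀ j : ℕ, ψ (t ^ j) = M ^ j := fun j => map_pow ψ t j
  have hordM : orderOf M = n := by rw [hMdef, orderOf_injective ψ hψinj, hordt]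
  have hdetM : M.det = 1 := (t : Matrix.SpecialLinearGroup (Fin 2) F).2
  have hM1 : M ^ (Fintype.card F + 1) = 1 := by
    rw [← hcard, ← hordM]; exact pow_orderOf_eq_one M
  have hMne : ∀ j : ℕ, 0 < j → j < n → M ^ j ≠ 1 := by
    intro j h1 h2 h3
    have hdvd : n ∣ j := hordM ▸ orderOf_dvd_of_pow_eq_one h3
    have := Nat.le_of_dvd h1 hdvd
    omega
  have hMm : M ^ ((Fintype.card F + 1) / 2) ≠ 1 :=
    hMne ((Fintype.card F + 1) / 2) (by omega) (by omega)
  have hM2 : M ^ 2 ≠ 1 := hMne 2 (by omega) (by omega)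
  -- reindex the sum by Fin n
  have htne : ∀ j : ℕ, 0 < j → j < n → t ^ j ≠ 1 := by
    intro j h1 h2 h3
    have hdvd : n ∣ j := hordt ▸ orderOf_dvd_of_pow_eq_one h3
    have := Nat.le_of_dvd h1 hdvd
    omega
  set w : ℂ := -(((χ t : ℂˣ) : ℂ))⁻¹ with hwdef
  have key : ∀ kk : Fin n, (↑((χ (t ^ (kk : ℕ)))⁻¹) : ℂ)
        * LinearMap.trace ℂ H (ρ ↑(t ^ (kk : ℕ)))
      = (if (kk : ℕ) = 0 then (n : ℂ) else 0) - w ^ (kk : ℕ) := by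
    intro kk
    by_cases h0 : (kk : ℕ) = 0
    · rw [h0]
      simp only [pow_zero, map_one, inv_one, Units.val_one, one_mul, if_pos,
        OneMemClass.coe_one, LinearMap.trace_one, hdim]
      rw [hcard]
      push_cast
      ring
    · have hkpos : 0 < (kk : ℕ) := Nat.pos_of_ne_zero h0
      have hkn : (kk : ℕ) < n := kk.2
      have htk : t ^ (kk : ℕ) ≠ 1 := htne _ hkpos hkn
      have hne1 : ((t ^ (kk : ℕ) : ↥T) : Matrix.SpecialLinearGroup (Fin 2) F) ≠ 1 := by
        intro h
        exact htk (by exact_mod_cast OneMemClass.coe_eq_one.1 h)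
      have hU := hreg _ (t ^ (kk : ℕ)).2 hne1
      have htr := hch _ hU
      have hmat : (((t ^ (kk : ℕ) : ↥T) : Matrix.SpecialLinearGroup (Fin 2) F)
          : Matrix (Fin 2) (Fin 2) F) = M ^ (kk : ℕ) := hMpow (kk : ℕ)
      rw [hmat] at hU htr
      have hdk : (M ^ (kk : ℕ) - 1).det ≠ 0 := hU.ne_zero
      have hQC := lemA hodd M hdetM hM1 hMm hM2 (kk : ℕ) hdk
      rw [htr, hQC, if_neg h0]
      have hχ : ((χ (t ^ (kk : ℕ)) : ℂˣ) : ℂ)⁻¹ = (((χ t : ℂˣ) : ℂ))⁻¹ ^ (kk : ℕ) := by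
        rw [map_pow, Units.val_pow_eq_pow_val, inv_pow]
      rw [Units.val_inv_eq_inv_val, hχ, hwdef]
      push_cast
      rw [neg_pow]
      ring
  -- the bijection
  haveI : NeZero n := ⟨by omega⟩
  have hbij : Function.Bijective (fun kk : Fin n => t ^ (kk : ℕ)) := by
    rw [Fintype.bijective_iff_injective_and_card]
    refine ⟨?_, by simp [hndef]⟩
    intro i j hij
    have := pow_injOn_Iio_orderOf (x := t) (by rw [hordt]; exact i.2) (by rw [hordt]; exact j.2) hij
    exact Fin.ext this
  have hsum : ∑ g : ↥T, (↑((χ g)⁻¹) : ℂ) * LinearMap.trace ℂ H (ρ ↑g)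
      = (n : ℂ) - ∑ i ∈ Finset.range n, w ^ i := by
    rw [← Fintype.sum_bijective _ hbij _ _ (fun kk => rfl)]
    calc ∑ kk : Fin n, (↑((χ (t ^ (kk : ℕ)))⁻¹) : ℂ)
          * LinearMap.trace ℂ H (ρ ↑(t ^ (kk : ℕ)))
        = ∑ kk : Fin n, ((if (kk : ℕ) = 0 then (n : ℂ) else 0) - w ^ (kk : ℕ)) :=
          Finset.sum_congr rfl (fun kk _ => key kk)
      _ = (∑ kk : Fin n, (if (kk : ℕ) = 0 then (n : ℂ) else 0))
          - ∑ kk : Fin n, w ^ (kk : ℕ) := Finset.sum_sub_distrib _ _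
      _ = (n : ℂ) - ∑ i ∈ Finset.range n, w ^ i := by
          rw [Fin.sum_univ_eq_sum_range (fun i => w ^ i),
            Fin.sum_univ_eq_sum_range (fun i => if i = 0 then (n : ℂ) else 0)]
          congr 1
          rw [Finset.sum_ite_eq' (Finset.range n) 0 (fun _ => (n : ℂ)),
            if_pos (Finset.mem_range.2 (by omega))]
  have htn : t ^ n = 1 := pow_card_eq_one
  have hchitn : ((χ t : ℂˣ) : ℂ) ^ n = 1 := by
    rw [← Units.val_pow_eq_pow_val, ← map_pow, htn, map_one, Units.val_one]
  have hneven : Even n := by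
    rcases hodd with ⟨m, hm⟩
    exact ⟨Fintype.card F / 2 + 1, by omega⟩
  have hχ1 : ((χ t : ℂˣ) : ℂ) = 1 → χ = 1 := by
    intro h
    have h' : χ t = 1 := Units.ext h
    ext g
    obtain ⟨j, rfl⟩ := ht g
    rw [map_zpow, h', one_zpow, MonoidHom.one_apply]
  by_cases hw : w = 1
  · -- quadratic character case
    have hχt : ((χ t : ℂˣ) : ℂ) = -1 := by
      rw [hwdef] at hw
      have h1 : (((χ t : ℂˣ) : ℂ))⁻¹ = -1 := neg_eq_iff_eq_neg.1 hw
      rw [← inv_inv (((χ t : ℂˣ) : ℂ)), h1]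
      norm_num
    have hχtu : χ t = -1 := Units.ext (by rw [hχt]; simp)
    have hcond : χ * χ = 1 ∧ χ ≠ 1 := by
      constructor
      · ext g
        obtain ⟨j, rfl⟩ := ht g
        rw [MonoidHom.mul_apply, map_zpow, hχtu, ← zpow_add, ← two_mul, zpow_mul,
          MonoidHom.one_apply]
        norm_num
      · intro h
        rw [h, MonoidHom.one_apply] at hχtu
        have h2 := congrArg (Units.val) hχtu
        rw [Units.val_one, Units.val_neg, Units.val_one] at h2
        norm_num at h2
    rw [if_pos hcond, hsum, hw]
    simp
  · have hwn : w ^ n = 1 := by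
      rw [hwdef, neg_pow, hneven.neg_one_pow, one_mul, inv_pow, hchitn, inv_one]
    have hgeom : ∑ i ∈ Finset.range n, w ^ i = 0 := by
      rw [geom_sum_eq hw, hwn, sub_self, zero_div]
    have hcond : ¬(χ * χ = 1 ∧ χ ≠ 1) := by
      rintro ⟨h1, h2⟩
      have hz : ((χ t : ℂˣ) : ℂ) * ((χ t : ℂˣ) : ℂ) = 1 := by
        have := congrArg (fun ξ : ↥T →* ℂˣ => ((ξ t : ℂˣ) : ℂ)) h1
        simpa using this
      rcases mul_self_eq_one_iff.1 hz with h' | h'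
      · exact h2 (hχ1 h')
      · apply hw
        rw [hwdef, h']
        norm_num
    rw [if_neg hcond, hsum, hgeom, sub_zero]
    exact inv_mul_cancel₀ (Nat.cast_ne_zero.mpr (by omega))
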